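/- arXiv:1510.02637 — 2 statements merged into one kernel-verified Lean document; each statement's English description precedes it below -/
import Mathlib

section
/- Let n ≥ 1 and let λ₁ and λ₂ be Lyndon words over Σ whose lengths divide n. If λ₁ < λ₂ in the lexicographic order, then λ₁^(n/|λ₁|) < λ₂^(n/|λ₂|) in the lexicographic order. -/
namespace Lyndon

variable {α : Type*}

/-- `rot w c` is the cyclic rotation of `w` obtained by moving its first `c mod |w|`
letters to the end. -/
def rot (w : List α) (c : ℕ) : List α :=
  w.drop (c % w.length) ++ w.take (c % w.length)

/-- `power w k` is the concatenation of `k` copies of `w`. -/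
def power (w : List α) (k : ℕ) : List α := (List.replicate k w).flatten

/-- `minrot w` is the lexicographically minimal cyclic rotation of `w`. -/
def minrot [LinearOrder α] (w : List α) : List α :=
  ((List.range w.length).map (rot w)).foldr min w

/-- A word is self-minimal if it equals its minimal cyclic rotation. -/
def SelfMinimal [LinearOrder α] (w : List α) : Prop := minrot w = w

/-- A word is primitive if it is a `k`-th power (for a positive integer `k`)
only of itself. -/
def Primitive (w : List α) : Prop :=
  ∀ (u : List α) (k : ℕ), 0 < k → w = power u k → u = w

/-- A Lyndon word is a nonempty word that is primitive and self-minimal. -/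
def IsLyndon [LinearOrder α] (w : List α) : Prop :=
  w ≠ [] ∧ Primitive w ∧ SelfMinimal w

/-- `Pref₋(w)`: the words `w_(i)·s` for `0 ≤ i ≤ n-1` and a letter `s < w[i+1]`,
together with `w` itself. -/
def PrefMinus [LinearOrder α] (w : List α) : Set (List α) :=
  {y | (∃ i : Fin w.length, ∃ s : α, s < w.get i ∧ y = w.take i ++ [s]) ∨ y = w}

/-- `L(w)`: the words containing a factor (contiguous subword) from `Pref₋(w)`. -/
def InL [LinearOrder α] (w x : List α) : Prop :=
  ∃ y ∈ PrefMinus w, y <:+: x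

/-! ### power lemmas -/

lemma power_zero (w : List α) : power w 0 = [] := rfl

lemma power_succ (w : List α) (k : ℕ) : power w (k + 1) = w ++ power w k := by
  simp [power, List.replicate_succ]

lemma power_add (w : List α) (a b : ℕ) : power w (a + b) = power w a ++ power w b := by
  induction a with
  | zero => simp [power_zero]
  | succ a ih =>
      have : a + 1 + b = (a + b) + 1 := by omega
      rw [this, power_succ, ih, power_succ, List.append_assoc]

lemma power_one (w : List α) : power w 1 = w := by simp [power]

lemma power_length (w : List α) (k : ℕ) : (power w k).length = k * w.length := by
  induction k with
  | zero => simp [power_zero]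
  | succ k ih => rw [power_succ, List.length_append, ih]; ring

/-! ### Lex lemmas -/

section LO
variable [LinearOrder α]

lemma lex_append_left_iff {x y : List α} :
    ∀ (a : List α), List.Lex (· < ·) (a ++ x) (a ++ y) ↔ List.Lex (· < ·) x y
  | [] => Iff.rfl
  | h :: t => by
      rw [List.cons_append, List.cons_append]
      constructor
      · intro hl
        cases hl with
        | cons hl => exact (lex_append_left_iff t).1 hl
        | rel hr => exact absurd hr (lt_irrefl _)
      · intro hl
        exact List.Lex.cons ((lex_append_left_iff t).2 hl)

lemma lex_append_right_of_ne {t : List α} (ht : t ≠ []) :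
    ∀ (u : List α), List.Lex (· < ·) u (u ++ t)
  | [] => by
      cases t with
      | nil => exact absurd rfl ht
      | cons a t => exact List.Lex.nil
  | a :: u => List.Lex.cons (lex_append_right_of_ne ht u)

lemma lex_of_prefix {u v : List α} (h : u <+: v) (hne : u ≠ v) :
    List.Lex (· < ·) u v := by
  obtain ⟨t, rfl⟩ := h
  have ht : t ≠ [] := by rintro rfl; simp at hne
  exact lex_append_right_of_ne ht u

lemma le_of_prefix {u v : List α} (h : u <+: v) : u ≤ v := by
  rcases eq_or_ne u v with rfl | hne
  · exact le_refl _
  · exact le_of_lt (lex_of_prefix h hne)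

lemma lex_append_of_not_prefix {u v : List α}
    (h : List.Lex (· < ·) u v) :
    ¬ u <+: v → ∀ (x y : List α), List.Lex (· < ·) (u ++ x) (v ++ y) := by
  induction h with
  | nil => intro hp; exact absurd (List.nil_prefix) hp
  | @rel a l b m hab => intro _ x y; exact List.Lex.rel hab
  | @cons a l m h ih =>
      intro hp x y
      refine List.Lex.cons (ih ?_ x y)
      intro hpre
      obtain ⟨t, rfl⟩ := hpre
      exact hp ⟨t, rfl⟩

lemma lex_strip : ∀ {a b : List α} {x y : List α}, a.length = b.length →
    List.Lex (· < ·) (a ++ x) (b ++ y) →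
    List.Lex (· < ·) a b ∨ (a = b ∧ List.Lex (· < ·) x y) := by
  intro a
  induction a with
  | nil =>
      intro b x y hlen h
      cases b with
      | nil => exact Or.inr ⟨rfl, h⟩
      | cons hb tb => simp at hlen
  | cons ha ta ih =>
      intro b x y hlen h
      cases b with
      | nil => simp at hlen
      | cons hb tb =>
          rw [List.cons_append, List.cons_append] at h
          cases h with
          | rel hr => exact Or.inl (List.Lex.rel hr)
          | cons h =>
              rcases ih (by simpa using hlen) h with h' | ⟨rfl, h'⟩
              · exact Or.inl (List.Lex.cons h')
              · exact Or.inr ⟨rfl, h'⟩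

/-! ### foldr min and rotations -/

lemma foldr_min_le {β : Type*} [LinearOrder β] (init : β) :
    ∀ (l : List β) (x : β), x ∈ l → l.foldr min init ≤ x
  | a :: l, x, hx => by
      rcases List.mem_cons.1 hx with rfl | hx
      · exact min_le_left _ _
      · exact le_trans (min_le_right _ _) (foldr_min_le init l x hx)

lemma le_rot {w : List α} (hw : SelfMinimal w) {i : ℕ} (hi : i < w.length) :
    w ≤ w.drop i ++ w.take i := by
  have hmem : rot w i ∈ (List.range w.length).map (rot w) :=
    List.mem_map_of_mem (List.mem_range.2 hi)
  have h2 : minrot w ≤ rot w i := foldr_min_le w _ _ hmem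
  rw [hw] at h2
  simpa [rot, Nat.mod_eq_of_lt hi] using h2

/-! ### commuting words -/

lemma comm_power : ∀ (p s : List α), p ++ s = s ++ p →
    ∃ (r : List α) (a b : ℕ), p = power r a ∧ s = power r b := by
  intro p s h
  rcases eq_or_ne p [] with rfl | hp
  · exact ⟨s, 0, 1, rfl, by rw [power_one]⟩
  rcases eq_or_ne s [] with rfl | hs
  · exact ⟨p, 1, 0, by rw [power_one], rfl⟩
  rcases le_total p.length s.length with hle | hle
  · have hps : p <+: s :=
      List.prefix_of_prefix_length_le (h ▸ List.prefix_append p s)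
        (List.prefix_append s p) hle
    obtain ⟨s', rfl⟩ := hps
    have h' : p ++ s' = s' ++ p :=
      List.append_cancel_left (h.trans (List.append_assoc p s' p))
    obtain ⟨r, a, b, hpr, hsr⟩ := comm_power p s' h'
    exact ⟨r, a, a + b, hpr, by rw [power_add, hpr, hsr]⟩
  · have hsp : s <+: p :=
      List.prefix_of_prefix_length_le (h ▸ List.prefix_append s p)
        (List.prefix_append p s) hle
    obtain ⟨p', rfl⟩ := hsp
    have h' : p' ++ s = s ++ p' :=
      List.append_cancel_left ((List.append_assoc s p' s).symm.trans h)
    obtain ⟨r, a, b, hpr, hsr⟩ := comm_power p' s h'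
    exact ⟨r, b + a, b, by rw [power_add, hpr, hsr], hsr⟩
termination_by p s => p.length + s.length
decreasing_by
  · have h2 := congrArg List.length (‹p ++ s' = s›)
    have h3 : 0 < p.length := List.length_pos_iff.2 hp
    rw [List.length_append] at h2
    omega
  · have h2 := congrArg List.length (‹s ++ p' = p›)
    have h3 : 0 < s.length := List.length_pos_iff.2 hs
    rw [List.length_append] at h2
    omega

/-! ### Lyndon words are smaller than their proper suffixes -/

lemma lyndon_lt_drop {w : List α} (hw : IsLyndon w) {i : ℕ} (h0 : 0 < i)
    (hi : i < w.length) : List.Lex (· < ·) w (w.drop i) := by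
  obtain ⟨hwne, hwprim, hwmin⟩ := hw
  set s := w.drop i with hs
  set p := w.take i with hp
  have hps : p ++ s = w := List.take_append_drop i w
  have hplen : p.length = i := by
    rw [hp, List.length_take]; omega
  have hslen : s.length = w.length - i := by rw [hs, List.length_drop]
  have hA : w ≤ s ++ p := le_rot hwmin hi
  by_cases hpre : s <+: w
  · exfalso
    obtain ⟨t, hst⟩ := hpre
    have htlen : t.length = i := by
      have hl := congrArg List.length hst
      rw [List.length_append] at hl
      omega
    set j := w.length - i with hj
    have hj0 : 0 < j := by omega
    have hjlt : j < w.length := by omega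
    have hB : w ≤ w.drop j ++ w.take j := le_rot hwmin hjlt
    have htake : w.take j = s := by
      rw [← hst, List.take_left' (by omega)]
    have hdrop : w.drop j = t := by
      rw [← hst, List.drop_left' (by omega)]
    rw [htake, hdrop] at hB
    rw [← hst] at hA
    rw [← hps] at hB
    -- hA : s ++ t ≤ s ++ p, hB : p ++ s ≤ t ++ s
    have h1 : t ≤ p := by
      rcases lt_or_eq_of_le hA with hlt' | heq
      · exact le_of_lt ((lex_append_left_iff s).1 hlt')
      · exact le_of_eq (List.append_cancel_left heq)
    have h2 : p ≤ t := by
      rcases lt_or_eq_of_le hB with hlt' | heq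
      · rcases lex_strip (by omega) hlt' with h' | ⟨h', h''⟩
        · exact le_of_lt h'
        · exact absurd (show (s : List α) < s from h'') (lt_irrefl _)
      · exact le_of_eq (List.append_inj_left heq (by omega))
    have htp : t = p := le_antisymm h1 h2
    have hcomm : p ++ s = s ++ p := by
      rw [hps, ← hst, htp]
    obtain ⟨r, a, b, hpr, hsr⟩ := comm_power p s hcomm
    have hpnil : p ≠ [] := by
      intro h'
      rw [h'] at hplen
      simp at hplen
      omega
    have hsnil : s ≠ [] := by
      intro h'
      rw [h'] at hslen
      simp at hslen
      omega
    have ha : a ≠ 0 := by rintro rfl; rw [power_zero] at hpr; exact hpnil hpr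
    have hb : b ≠ 0 := by rintro rfl; rw [power_zero] at hsr; exact hsnil hsr
    have hwpow : w = power r (a + b) := by
      rw [← hps, power_add, hpr, hsr]
    have hr : r = w := hwprim r (a + b) (by omega) hwpow
    have hlw : w.length = (a + b) * w.length := by
      conv_lhs => rw [hwpow, power_length, hr]
    have hlen2 : 2 * w.length ≤ (a + b) * w.length :=
      Nat.mul_le_mul_right _ (by omega)
    rw [← hlw] at hlen2
    omega
  · rcases lt_trichotomy w s with hlt' | heq | hgt
    · exact hlt'
    · exfalso
      have := congrArg List.length heq
      omega
    · exfalso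
      have hlex : List.Lex (· < ·) (s ++ p) (w ++ []) :=
        lex_append_of_not_prefix hgt hpre p []
      rw [List.append_nil] at hlex
      exact absurd hA (not_le.2 hlex)

/-! ### powers of a proper prefix of a Lyndon word -/

lemma power_lt_of_prefix {u v : List α} (hv : IsLyndon v) (hu : u <+: v)
    (hne : u ≠ v) (hunil : u ≠ []) : ∀ k, power u k < v := by
  have hul : 0 < u.length := List.length_pos_iff.2 hunil
  have hlt : u.length < v.length := by
    rcases hu with ⟨t, rfl⟩
    have : t ≠ [] := by rintro rfl; simp at hne
    have : 0 < t.length := List.length_pos_iff.2 this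
    simp [List.length_append]; omega
  have hz : v < v.drop u.length := lyndon_lt_drop hv hul hlt
  have hvz : v = u ++ v.drop u.length := by
    obtain ⟨t, rfl⟩ := hu
    rw [List.drop_left]
  intro k
  induction k with
  | zero =>
      rw [power_zero]
      cases v with
      | nil => exact absurd rfl hv.1
      | cons a v => exact List.Lex.nil
  | succ k ih =>
      have h1 : power u k < v.drop u.length := lt_trans ih hz
      calc power u (k + 1) = u ++ power u k := power_succ u k
        _ < u ++ v.drop u.length := (lex_append_left_iff u).2 h1
        _ = v := hvz.symm

end LO

/-- For Lyndon words `λ₁, λ₂` with lengths dividing `n ≥ 1`, if `λ₁ < λ₂` then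
`λ₁^(n/|λ₁|) < λ₂^(n/|λ₂|)`. -/
theorem stmt_4 [LinearOrder α] [Fintype α] [Nonempty α]
    (n : ℕ) (hn : 1 ≤ n) (l1 l2 : List α)
    (h1 : IsLyndon l1) (h2 : IsLyndon l2)
    (hd1 : l1.length ∣ n) (hd2 : l2.length ∣ n)
    (hlt : l1 < l2) :
    power l1 (n / l1.length) < power l2 (n / l2.length) := by
  have hl1 : 0 < l1.length := List.length_pos_iff.2 h1.1
  have hl2 : 0 < l2.length := List.length_pos_iff.2 h2.1
  have hk1 : 0 < n / l1.length := Nat.div_pos (Nat.le_of_dvd hn hd1) hl1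
  have hk2 : 0 < n / l2.length := Nat.div_pos (Nat.le_of_dvd hn hd2) hl2
  by_cases hpre : l1 <+: l2
  · have hne : l1 ≠ l2 := ne_of_lt hlt
    have ha : power l1 (n / l1.length) < l2 :=
      power_lt_of_prefix h2 hpre hne h1.1 _
    have hb : l2 ≤ power l2 (n / l2.length) := by
      have : power l2 (n / l2.length) = l2 ++ power l2 (n / l2.length - 1) := by
        conv_lhs => rw [← Nat.sub_add_cancel hk2, power_succ]
      rw [this]
      exact le_of_prefix ⟨_, rfl⟩
    exact lt_of_lt_of_le ha hb
  · have e1 : power l1 (n / l1.length) = l1 ++ power l1 (n / l1.length - 1) := by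
      conv_lhs => rw [← Nat.sub_add_cancel hk1, power_succ]
    have e2 : power l2 (n / l2.length) = l2 ++ power l2 (n / l2.length - 1) := by
      conv_lhs => rw [← Nat.sub_add_cancel hk2, power_succ]
    rw [e1, e2]
    exact lex_append_of_not_prefix hlt hpre _ _

end Lyndon
end

section
/- Let w be a self-minimal word of length n ≥ 1 over Σ, and let x be a word of length n such that x·x ∈ L(w) but x ∉ L(w). Then there exists a unique decomposition x = x₁·x₂·x₃ such that x₁ and x₃ are nonempty, x₃·x₁ ∈ Pref_-(w), and the word x₁·x₂ satisfies both: x₁·x₂ ∉ L(w), and no nonempty suffix of x₁·x₂ is a prefix of w. -/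
namespace Lyndon

variable {α : Type*}

lemma foldr_min_le_s13 [LinearOrder α] {l : List (List α)} {a b : List α} (h : a ∈ l) :
    l.foldr min b ≤ a := by
  induction l with
  | nil => cases h
  | cons x xs ih =>
    rcases List.mem_cons.mp h with rfl | h
    · exact min_le_left _ _
    · exact le_trans (min_le_right _ _) (ih h)

lemma le_rot_s13 [LinearOrder α] {w : List α} (hsm : SelfMinimal w) (hw : w ≠ []) (m : ℕ) :
    w ≤ rot w m := by
  have hn : 0 < w.length := List.length_pos_iff.mpr hw
  have h1 : rot w m = rot w (m % w.length) := by
    unfold rot; rw [Nat.mod_mod_of_dvd m dvd_rfl]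
  have h2 : rot w (m % w.length) ∈ (List.range w.length).map (rot w) :=
    List.mem_map.mpr ⟨m % w.length, List.mem_range.mpr (Nat.mod_lt _ hn), rfl⟩
  calc w = minrot w := hsm.symm
    _ ≤ rot w (m % w.length) := foldr_min_le_s13 h2
    _ = rot w m := h1.symm

lemma lt_of_shared_prefix [LinearOrder α] (p a b : List α) {c d : α} (h : c < d) :
    p ++ c :: a < p ++ d :: b := by
  induction p with
  | nil => exact List.Lex.rel h
  | cons x xs ih => exact List.Lex.cons ih

lemma exists_firstdiff [LinearOrder α] :
    ∀ {a b : List α}, a.length = b.length → a < b →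
    ∃ t, ∃ (ht : t < a.length) (ht' : t < b.length),
      a.take t = b.take t ∧ a[t] < b[t] := by
  intro a b hlen h
  induction h with
  | nil => simp at hlen
  | @rel a' b' c d h => exact ⟨0, by simp, by simp, rfl, h⟩
  | @cons a' b' c h ih =>
    obtain ⟨t, ht, ht', heq, hlt⟩ := ih (by simpa using hlen)
    exact ⟨t + 1, by simpa using ht, by simpa using ht', by simpa using heq, by simpa using hlt⟩

/-- From self-minimality: a rotation cannot be lexicographically smaller. -/
lemma rot_ge [LinearOrder α] {w : List α} (hsm : SelfMinimal w) (hw : w ≠ [])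
    {m t : ℕ} (ht : m + t < w.length)
    (heq : (w.drop m).take t = w.take t)
    (hlt : w[m + t]'ht < w[t]'(lt_of_le_of_lt (Nat.le_add_left _ _) ht)) : False := by
  have hn : 0 < w.length := List.length_pos_iff.mpr hw
  have hm : m < w.length := lt_of_le_of_lt (Nat.le_add_right _ _) ht
  have hrot : rot w m = w.drop m ++ w.take m := by
    unfold rot; rw [Nat.mod_eq_of_lt hm]
  have htd : t < (w.drop m).length := by
    rw [List.length_drop]; omega
  have hsplit1 : rot w m = w.take t ++ w[m+t]'ht :: ((w.drop m).drop (t+1) ++ w.take m) := by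
    rw [hrot]
    conv_lhs => rw [← List.take_append_drop t (w.drop m)]
    rw [heq, List.drop_eq_getElem_cons htd, List.getElem_drop]
    simp
  have hsplit2 : w = w.take t ++ w[t]'(by omega) :: w.drop (t+1) := by
    conv_lhs => rw [← List.take_append_drop t w]
    rw [List.drop_eq_getElem_cons (by omega : t < w.length)]
  have : rot w m < w := by
    rw [hsplit1]; conv_rhs => rw [hsplit2]
    exact lt_of_shared_prefix _ _ _ hlt
  exact absurd (le_rot_s13 hsm hw m) (not_le.mpr this)

lemma prefminus_len [LinearOrder α] {w y : List α} (hy : y ∈ PrefMinus w) :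
    y ≠ [] ∨ w = [] := by
  rcases hy with ⟨i, s, _, h⟩ | h
  · left; rw [h]; simp
  · by_cases h' : w = []
    · right; exact h'
    · left; rw [h]; exact h'

lemma prefminus_length_le [LinearOrder α] {w y : List α} (hy : y ∈ PrefMinus w) :
    y.length ≤ w.length := by
  rcases hy with ⟨i, s, _, h⟩ | h
  · rw [h]; have := i.2; simp
  · rw [h]

lemma lemB [LinearOrder α] {w : List α} (hw : w ≠ []) (hsm : SelfMinimal w) {y : List α}
    (hy : y ∈ PrefMinus w) {m : ℕ} (hm : m ≤ w.length) :
    ∃ y' ∈ PrefMinus w, y' <+: w.take m ++ y := by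
  set n := w.length with hn
  set L := min y.length (n - m) with hL
  have hyne : y ≠ [] := (prefminus_len hy).resolve_right hw
  have hylen : 0 < y.length := List.length_pos_iff.mpr hyne
  have hyle : y.length ≤ n := prefminus_length_le hy
  have hAlen : (y.take L).length = L := by simp [hL]
  have hBlen : (((w.drop m).take L)).length = L := by simp [hL]; all_goals omega
  rcases lt_trichotomy (y.take L) ((w.drop m).take L) with h | h | h
  · -- first difference: smaller letter, gives a PrefMinus prefix
    obtain ⟨t, ht, ht', heq, hlt⟩ := exists_firstdiff (hAlen.trans hBlen.symm) h
    rw [hAlen] at ht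
    have htL : t < L := ht
    have htn : m + t < n := by omega
    have hty : t < y.length := by omega
    have heq' : y.take t = (w.drop m).take t := by
      have h1 : (y.take L).take t = y.take t := by
        rw [List.take_take]; congr 1; omega
      have h2 : ((w.drop m).take L).take t = (w.drop m).take t := by
        rw [List.take_take]; congr 1; omega
      rw [← h1, ← h2, heq]
    have hA : (y.take L)[t]'(by omega) = y[t]'hty := List.getElem_take
    have hB : ((w.drop m).take L)[t]'(by rw [hBlen]; omega) = w[m+t]'htn := by
      rw [List.getElem_take, List.getElem_drop]
    refine ⟨w.take (m+t) ++ [y[t]'hty], Or.inl ⟨⟨m+t, htn⟩, y[t]'hty, ?_, rfl⟩, ?_⟩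
    · rw [List.get_eq_getElem]
      rw [hA, hB] at hlt; exact hlt
    · refine ⟨y.drop (t+1), ?_⟩
      have hy1 : y = y.take t ++ y[t]'hty :: y.drop (t+1) := by
        conv_lhs => rw [← List.take_append_drop t y, List.drop_eq_getElem_cons hty]
      calc (w.take (m+t) ++ [y[t]'hty]) ++ y.drop (t+1)
          = (w.take m ++ (w.drop m).take t) ++ ([y[t]'hty] ++ y.drop (t+1)) := by
            rw [← List.take_add, List.append_assoc]
        _ = w.take m ++ (y.take t ++ y[t]'hty :: y.drop (t+1)) := by
            rw [← heq']; simp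
        _ = w.take m ++ y := by rw [← hy1]
  · -- equality case
    by_cases hc : n - m ≤ y.length
    · -- w is a prefix
      have hLe : L = n - m := by omega
      have hBfull : (w.drop m).take L = w.drop m := by
        apply List.take_of_length_le; simp [hLe]; omega
      refine ⟨w, Or.inr rfl, y.drop L, ?_⟩
      calc w ++ y.drop L = w.take m ++ w.drop m ++ y.drop L := by
            rw [List.take_append_drop]
        _ = w.take m ++ (y.take L ++ y.drop L) := by
            rw [h, hBfull, List.append_assoc]
        _ = w.take m ++ y := by rw [List.take_append_drop]
    · -- y is a proper prefix of drop m w : contradiction with self-minimality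
      exfalso
      have hLy : L = y.length := by omega
      have hyeq : y = (w.drop m).take y.length := by
        conv_lhs => rw [← List.take_of_length_le (le_refl y.length), ← hLy]
        rw [hLy] at h ⊢; exact h
      rcases hy with ⟨i, s, hs, hyw⟩ | rfl
      · have hilt : (i : ℕ) < n := i.2
        have hylen2 : y.length = (i : ℕ) + 1 := by
          rw [hyw]; simp; all_goals omega
        have hmi : m + (i : ℕ) < n := by omega
        apply rot_ge hsm hw hmi (t := (i : ℕ))
        · -- (w.drop m).take i = w.take i
          have h1 : y.take (i : ℕ) = w.take (i : ℕ) := by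
            rw [hyw, List.take_append_of_le_length (by simp; all_goals omega), List.take_take]
            congr 1
            omega
          have h2 : y.take (i : ℕ) = (w.drop m).take (i : ℕ) := by
            rw [hyeq, List.take_take]; congr 1; omega
          rw [← h2, h1]
        · -- w[m+i] = s < w[i]
          have h3 : w[m + (i:ℕ)]'hmi = s := by
            have e1 : y[(i:ℕ)]'(by omega) = s := by
              rw [List.getElem_of_eq hyw]
              rw [List.getElem_append_right (by simp at hylen2 ⊢; all_goals omega)]
              simp
            have e2 : y[(i:ℕ)]'(by omega) = w[m + (i:ℕ)]'hmi := by
              rw [List.getElem_of_eq hyeq]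
              rw [List.getElem_take, List.getElem_drop]
            rw [← e2, e1]
          rw [h3]
          simpa using hs
      · -- y = w : impossible since |w| = n < n - m ≤ n
        omega
  · -- B < A : contradiction with self-minimality
    exfalso
    obtain ⟨t, ht, ht', heq, hlt⟩ := exists_firstdiff (hBlen.trans hAlen.symm) h
    have htL : t < L := by rw [hBlen] at ht; exact ht
    have htn : m + t < n := by omega
    have hty : t < y.length := by omega
    have heq' : (w.drop m).take t = y.take t := by
      have h1 : (y.take L).take t = y.take t := by rw [List.take_take]; congr 1; omega
      have h2 : ((w.drop m).take L).take t = (w.drop m).take t := by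
        rw [List.take_take]; congr 1; omega
      rw [← h1, ← h2, heq]
    have hB : ((w.drop m).take L)[t]'ht = w[m+t]'htn := by
      rw [List.getElem_take, List.getElem_drop]
    have hA : (y.take L)[t]'ht' = y[t]'hty := List.getElem_take
    rw [hA, hB] at hlt
    -- now show y.take t = w.take t and y[t] ≤ w[t]
    have key : y.take t = w.take t ∧ y[t]'hty ≤ w[t]'(by omega) := by
      rcases hy with ⟨i, s, hs, hyw⟩ | rfl
      · have hilt : (i : ℕ) < n := i.2
        have hylen2 : y.length = (i : ℕ) + 1 := by rw [hyw]; simp; all_goals omega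
        have hti : t ≤ (i : ℕ) := by omega
        constructor
        · rw [hyw, List.take_append_of_le_length (by simp; all_goals omega), List.take_take]
          congr 1
          omega
        · rcases lt_or_eq_of_le hti with hti' | hti'
          · have e : y[t]'hty = w[t]'(by omega) := by
              rw [List.getElem_of_eq hyw, List.getElem_append_left (by simp; all_goals omega),
                List.getElem_take]
            rw [e]
          · subst hti'
            have e : y[(i:ℕ)]'hty = s := by
              rw [List.getElem_of_eq hyw,
                List.getElem_append_right (by simp at hylen2 ⊢; all_goals omega)]
              simp
            rw [e]
            exact le_of_lt (by simpa using hs)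
      · exact ⟨rfl, le_refl _⟩
    exact rot_ge hsm hw htn (heq'.trans key.1) (lt_of_lt_of_le hlt key.2)

lemma prefix_append_left {l a b : List α} (h : a <+: b) : l ++ a <+: l ++ b := by
  obtain ⟨d, rfl⟩ := h; exact ⟨d, by simp⟩

lemma prefminus_antichain [LinearOrder α] {w y y' : List α}
    (hy : y ∈ PrefMinus w) (hy' : y' ∈ PrefMinus w) (h : y <+: y') : y = y' := by
  by_cases hlen : y.length = y'.length
  · exact h.eq_of_length hlen
  have hlt : y.length < y'.length := lt_of_le_of_ne h.length_le hlen
  have hy'le : y'.length ≤ w.length := prefminus_length_le hy'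
  have htake : y = y'.take y.length := List.prefix_iff_eq_take.mp h
  have hyw : y = w.take y.length := by
    rcases hy' with ⟨i, s, hs, he⟩ | he
    · have hi : (i:ℕ) < w.length := i.2
      have hl : y'.length = (i:ℕ)+1 := by rw [he]; simp; all_goals omega
      have hyi : y.length ≤ (i:ℕ) := by omega
      conv_lhs => rw [htake, he]
      rw [List.take_append_of_le_length (by simp; all_goals omega), List.take_take,
        min_eq_left hyi]
    · conv_lhs => rw [htake, he]
  rcases hy with ⟨i, s, hs, he⟩ | he
  · exfalso
    have hi : (i:ℕ) < w.length := i.2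
    have hl : y.length = (i:ℕ)+1 := by rw [he]; simp; all_goals omega
    have hts : w.take ((i:ℕ)+1) = w.take (i:ℕ) ++ [w.get i] := by
      rw [List.take_succ]
      congr 1
      rw [List.getElem?_eq_getElem hi]
      rfl
    have heq2 : w.take (i:ℕ) ++ [s] = w.take (i:ℕ) ++ [w.get i] := by
      rw [← he, hyw, hl, hts]
    have : s = w.get i := by
      have := List.append_cancel_left heq2
      simpa using this
    exact absurd hs (by rw [this]; exact lt_irrefl _)
  · rw [he] at hlt; omega

lemma infix_of_drop {x y t : List α} {p : ℕ} (h : (x++x).drop p = y ++ t)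
    (hp : p + y.length ≤ x.length) : y <:+: x := by
  have hpn : p ≤ x.length := le_trans (Nat.le_add_right _ _) hp
  have he : x.drop p ++ x = y ++ t := by
    rw [← List.drop_append_of_le_length hpn, h]
  have hyt : y = (x.drop p).take y.length := by
    have h2 := congrArg (List.take y.length) he
    rw [List.take_append, List.take_left] at h2
    have h3 : y.length - (x.drop p).length = 0 := by simp; omega
    rw [h3] at h2
    simpa using h2.symm
  refine ⟨x.take p, (x.drop p).drop y.length, ?_⟩
  calc x.take p ++ y ++ (x.drop p).drop y.length
      = x.take p ++ ((x.drop p).take y.length ++ (x.drop p).drop y.length) := by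
        rw [← hyt, List.append_assoc]
    _ = x.take p ++ x.drop p := by rw [List.take_append_drop]
    _ = x := List.take_append_drop _ _

lemma cross_extract {x y t : List α} {k : ℕ} (h : (x++x).drop k = y ++ t)
    (hk : k < x.length) (hky : x.length < k + y.length) (hyn : y.length ≤ x.length) :
    y = x.drop k ++ x.take (k + y.length - x.length) := by
  have he : x.drop k ++ x = y ++ t := by
    rw [← List.drop_append_of_le_length (le_of_lt hk), h]
  have h2 := congrArg (List.take y.length) he
  rw [List.take_append, List.take_left,
    List.take_of_length_le (by simp; omega)] at h2
  have h3 : y.length - (x.drop k).length = k + y.length - x.length := by simp; omega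
  rw [h3] at h2
  exact h2.symm

lemma cross_take_pref [LinearOrder α] {w x y t : List α} {k K : ℕ}
    (hy : y ∈ PrefMinus w) (h : (x++x).drop k = y ++ t)
    (hkK : k < K) (hKn : K ≤ x.length) (hend : x.length < k + y.length)
    (hwx : w.length = x.length) :
    y.take (K - k) ≠ [] ∧ y.take (K - k) <:+ x.take K ∧ y.take (K - k) <+: w := by
  have hKk : K - k ≤ y.length := by omega
  have he : x.drop k ++ x = y ++ t := by
    rw [← List.drop_append_of_le_length (by omega : k ≤ x.length), h]
  have hseg : (x.drop k).take (K - k) = y.take (K - k) := by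
    have h2 := congrArg (List.take (K - k)) he
    rw [List.take_append_of_le_length (by simp; omega),
      List.take_append_of_le_length hKk] at h2
    exact h2
  refine ⟨?_, ?_, ?_⟩
  · apply List.ne_nil_of_length_pos
    simp
    omega
  · refine ⟨x.take k, ?_⟩
    rw [hseg.symm, ← List.take_add]
    congr 1
    omega
  · rcases hy with ⟨i, s, hs, hyw⟩ | hyw
    · have hi : (i:ℕ) < w.length := i.2
      have hl : y.length = (i:ℕ)+1 := by rw [hyw]; simp; all_goals omega
      have : y.take (K - k) = w.take (K - k) := by
        rw [hyw, List.take_append_of_le_length (by simp; all_goals omega), List.take_take]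
        congr 1
        omega
      rw [this]
      exact List.take_prefix _ _
    · rw [hyw]
      exact List.take_prefix _ _

/-- For self-minimal `w` of length `n ≥ 1` and `x` of length `n` with `x·x ∈ L(w)`
but `x ∉ L(w)`, there is a unique decomposition `x = x₁·x₂·x₃` with `x₁, x₃` nonempty,
`x₃·x₁ ∈ Pref₋(w)`, `x₁·x₂ ∉ L(w)`, and no nonempty suffix of `x₁·x₂` being a prefix
of `w`. -/
theorem stmt_13 [LinearOrder α] [Fintype α] [Nonempty α]
    (w x : List α) (n : ℕ) (hn : 1 ≤ n) (hw : w.length = n) (hsm : SelfMinimal w)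
    (hx : x.length = n) (hxx : InL w (x ++ x)) (hxnot : ¬ InL w x) :
    ∃! p : List α × List α × List α,
      x = p.1 ++ p.2.1 ++ p.2.2 ∧ p.1 ≠ [] ∧ p.2.2 ≠ [] ∧
      (p.2.2 ++ p.1) ∈ PrefMinus w ∧
      ¬ InL w (p.1 ++ p.2.1) ∧
      ∀ s : List α, s ≠ [] → s <:+ p.1 ++ p.2.1 → ¬ s <+: w := by
  classical
  have hwne : w ≠ [] := by
    intro h
    rw [h] at hw
    simp at hw
    omega
  set P : ℕ → Prop :=
    fun k => ∃ y ∈ PrefMinus w, ∃ t, (x ++ x).drop k = y ++ t ∧ k < n ∧ n < k + y.length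
    with hPdef
  have hPne : ∃ k, P k := by
    obtain ⟨y, hy, s, t, hst⟩ := hxx
    have hyn : y.length ≤ n := hw ▸ prefminus_length_le hy
    have hdrop : (x ++ x).drop s.length = y ++ t := by
      rw [← hst, List.append_assoc, List.drop_left]
    by_cases h1 : s.length + y.length ≤ n
    · exact absurd ⟨y, hy, infix_of_drop hdrop (by omega)⟩ hxnot
    by_cases h2 : s.length < n
    · exact ⟨s.length, y, hy, t, hdrop, h2, by omega⟩
    · exfalso
      apply hxnot
      refine ⟨y, hy, ?_⟩
      have hk : s.length = x.length + (s.length - n) := by omega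
      have hd2 : (x ++ x).drop s.length = x.drop (s.length - n) := by
        conv_lhs => rw [hk]
        rw [List.drop_append]; simp
      have hpref : y <+: x.drop (s.length - n) := ⟨t, by rw [← hd2, hdrop]⟩
      exact hpref.isInfix.trans (List.drop_suffix _ _).isInfix
  set k := Nat.find hPne with hkdef
  have hkP : P k := Nat.find_spec hPne
  have hkmin : ∀ k', P k' → k ≤ k' := fun k' h => Nat.find_min' hPne h
  obtain ⟨y, hy, t, hdrop, hkn, hky⟩ := hkP
  have hyn : y.length ≤ n := hw ▸ prefminus_length_le hy
  set j := k + y.length - n with hjdef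
  have hj1 : 1 ≤ j := by omega
  have hjk : j ≤ k := by omega
  have hyeq : y = x.drop k ++ x.take j := by
    have h := cross_extract hdrop (by omega) (by omega) (by omega)
    rw [hx] at h
    exact h
  have heq2 : x.take j ++ (x.take k).drop j = x.take k := by
    conv_rhs => rw [← List.take_append_drop j (x.take k)]
    rw [List.take_take, min_eq_left hjk]
  refine ⟨⟨x.take j, (x.take k).drop j, x.drop k⟩, ⟨?_, ?_, ?_, ?_, ?_, ?_⟩, ?_⟩
  · show x = x.take j ++ (x.take k).drop j ++ x.drop k
    rw [heq2, List.take_append_drop]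
  · apply List.ne_nil_of_length_pos
    simp
    omega
  · apply List.ne_nil_of_length_pos
    simp
    omega
  · show x.drop k ++ x.take j ∈ PrefMinus w
    rw [← hyeq]
    exact hy
  · rintro ⟨z, hz, hzi⟩
    apply hxnot
    refine ⟨z, hz, hzi.trans ?_⟩
    show x.take j ++ (x.take k).drop j <:+: x
    rw [heq2]
    exact (List.take_prefix k x).isInfix
  · intro s hsne hssuf hspref
    rw [show (x.take j, (x.take k).drop j, x.drop k).1 ++
        (x.take j, (x.take k).drop j, x.drop k).2.1 = x.take j ++ (x.take k).drop j from rfl,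
      heq2] at hssuf
    set m := s.length with hm
    have hm1 : 0 < m := List.length_pos_iff.mpr hsne
    have hmk : m ≤ k := by
      have := hssuf.length_le
      simp at this
      omega
    have hsw : s = w.take m := List.prefix_iff_eq_take.mp hspref
    obtain ⟨y', hy', hy'pref⟩ := lemB hwne hsm hy (show m ≤ w.length by omega)
    obtain ⟨v, hv⟩ := hssuf
    have hvlen : v.length = k - m := by
      have := congrArg List.length hv
      simp at this
      omega
    have hxxsplit : x ++ x = v ++ (s ++ (y ++ t)) := by
      have h1 : x ++ x = x.take k ++ (x ++ x).drop k := by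
        conv_lhs => rw [← List.take_append_drop k (x ++ x)]
        congr 1
        exact List.take_append_of_le_length (by omega)
      rw [h1, hdrop, ← hv, List.append_assoc]
    have hdrop2 : (x ++ x).drop (k - m) = s ++ (y ++ t) := by
      rw [hxxsplit, ← hvlen, List.drop_left]
    obtain ⟨c, hc⟩ := hy'pref
    have hmid : s ++ (y ++ t) = y' ++ (c ++ t) := by
      rw [← List.append_assoc, hsw, ← hc, List.append_assoc]
    have hdrop3 : (x ++ x).drop (k - m) = y' ++ (c ++ t) := by rw [hdrop2, hmid]
    by_cases hcase : (k - m) + y'.length ≤ n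
    · exact absurd ⟨y', hy', infix_of_drop hdrop3 (by omega)⟩ hxnot
    · have hPk : P (k - m) := ⟨y', hy', c ++ t, hdrop3, by omega, by omega⟩
      have := hkmin _ hPk
      omega
  · rintro ⟨q1, q2, q3⟩ ⟨hq1, hq2, hq3, hq4, hq5, hq6⟩
    simp only at hq1 hq2 hq3 hq4 hq5 hq6 ⊢
    set kq := q1.length + q2.length with hkq
    have hlq : n = kq + q3.length := by
      have := congrArg List.length hq1
      simp [hx] at this
      omega
    have hq3pos : 0 < q3.length := List.length_pos_iff.mpr hq3
    have hq1pos : 0 < q1.length := List.length_pos_iff.mpr hq2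
    have hkqn : kq < n := by omega
    have htk : x.take kq = q1 ++ q2 := by
      rw [hq1, show kq = (q1 ++ q2).length by simp [hkq]]
      exact List.take_left
    have hdk : x.drop kq = q3 := by
      rw [hq1, show kq = (q1 ++ q2).length by simp [hkq]]
      exact List.drop_left
    have htj : x.take q1.length = q1 := by
      rw [hq1, List.append_assoc]
      exact List.take_left
    have hPkq : P kq := by
      refine ⟨q3 ++ q1, hq4, q2 ++ q3, ?_, hkqn, ?_⟩
      · rw [List.drop_append_of_le_length (by omega), hdk]
        conv_lhs => rw [hq1]
        simp [List.append_assoc]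
      · simp
        omega
    have hkkq : k = kq := by
      have h1 : k ≤ kq := hkmin _ hPkq
      by_contra hne
      have h2 : k < kq := lt_of_le_of_ne h1 hne
      obtain ⟨hne', hsuf, hpref⟩ :=
        cross_take_pref hy hdrop h2 (by omega) (by omega) (by rw [hw, hx])
      rw [htk] at hsuf
      exact hq6 _ hne' hsuf hpref
    have hq3len : q3.length = n - k := by omega
    have hyq : q3 ++ q1 = x.drop k ++ x.take q1.length := by rw [hkkq, hdk, htj]
    have hyp : x.drop k ++ x.take j ∈ PrefMinus w := by
      rw [← hyeq]
      exact hy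
    have hjq : q1.length = j := by
      rcases le_total q1.length j with hle | hle
      · have hpref : q3 ++ q1 <+: x.drop k ++ x.take j := by
          rw [hyq]
          apply prefix_append_left
          rw [show x.take q1.length = (x.take j).take q1.length by
            rw [List.take_take, min_eq_left hle]]
          exact List.take_prefix _ _
        have he := prefminus_antichain hq4 hyp hpref
        have hl := congrArg List.length he
        simp [hx] at hl
        omega
      · have hpref : x.drop k ++ x.take j <+: q3 ++ q1 := by
          rw [hyq]
          apply prefix_append_left
          rw [show x.take j = (x.take q1.length).take j by
            rw [List.take_take, min_eq_left hle]]
          exact List.take_prefix _ _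
        have he := prefminus_antichain hyp hq4 hpref
        have hl := congrArg List.length he
        simp [hx] at hl
        omega
    have hq1e : q1 = x.take j := by rw [← hjq, htj]
    have hq3e : q3 = x.drop k := by rw [← hdk, hkkq]
    have hq2e : q2 = (x.take k).drop j := by
      have h1 : q1 ++ q2 = x.take k := by rw [← htk, hkkq]
      rw [hq1e] at h1
      rw [← heq2] at h1
      exact List.append_cancel_left h1
    rw [hq1e, hq2e, hq3e]

end Lyndon
end
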